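/- Let A be a square singular matrix over a field F. Then there exists a von Neumann inverse A⁻ of A such that i(A) = i(A²A⁻ + I − AA⁻) + 1. -/
import Mathlib

open Matrix Polynomial

/-- The Drazin index of a square matrix: the smallest natural number `k`
such that `rank (A ^ k) = rank (A ^ (k+1))`. -/
noncomputable def drazinIndex {n : Type*} [Fintype n] [DecidableEq n]
    {F : Type*} [Field F] (A : Matrix n n F) : ℕ :=
  sInf {k : ℕ | (A ^ k).rank = (A ^ (k + 1)).rank}

/-- `X` is the Drazin inverse of `A`:
`A^(k+1) * X = A^k`, `X * A * X = X`, `A * X = X * A` with `k = drazinIndex A`. -/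
def IsDrazinInverse {n : Type*} [Fintype n] [DecidableEq n]
    {F : Type*} [Field F] (A X : Matrix n n F) : Prop :=
  A ^ (drazinIndex A + 1) * X = A ^ drazinIndex A ∧ X * A * X = X ∧ A * X = X * A

/-- Any matrix over a field has a von Neumann inverse. -/
lemma exists_vonNeumann_aux {F : Type*} [Field F] {n : ℕ}
    (A : Matrix (Fin n) (Fin n) F) : ∃ Am : Matrix (Fin n) (Fin n) F, A * Am * A = A := by
  set f : (Fin n → F) →ₗ[F] (Fin n → F) := Matrix.toLin' A with hf
  obtain ⟨g, hg⟩ := f.rangeRestrict.exists_rightInverse_of_surjective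
    (LinearMap.range_eq_top.2 f.surjective_rangeRestrict)
  obtain ⟨q, hq⟩ := (LinearMap.range f).exists_isCompl
  set π := Submodule.linearProjOfIsCompl _ q hq with hπdef
  refine ⟨LinearMap.toMatrix' (g.comp π), ?_⟩
  have key : Matrix.toLin' (A * LinearMap.toMatrix' (g.comp π) * A) = Matrix.toLin' A := by
    rw [Matrix.toLin'_mul, Matrix.toLin'_mul, Matrix.toLin'_toMatrix']
    refine LinearMap.ext fun x => ?_
    have hmem : f x ∈ LinearMap.range f := LinearMap.mem_range_self f x
    have hgy : ∀ y : LinearMap.range f, f (g y) = (y : Fin n → F) := by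
      intro y
      exact congrArg Subtype.val (LinearMap.ext_iff.1 hg y)
    have hπapp : π (f x) = ⟨f x, hmem⟩ :=
      Submodule.linearProjOfIsCompl_apply_left hq ⟨f x, hmem⟩
    show f ((g.comp π) (f x)) = f x
    rw [LinearMap.comp_apply, hπapp]
    exact hgy ⟨f x, hmem⟩
  have := congrArg LinearMap.toMatrix' key
  simpa [LinearMap.toMatrix'_comp, LinearMap.toMatrix'_toLin', Matrix.mul_assoc] using this

lemma exists_rank_pow_stab (f : ℕ → ℕ) (hf : ∀ k, f (k + 1) ≤ f k) :
    ∃ k, f k = f (k + 1) := by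
  by_contra h
  push_neg at h
  have hlt : ∀ k, f (k + 1) < f k := fun k => (hf k).lt_of_ne fun e => h k e.symm
  have key : ∀ k, f k + k ≤ f 0 := by
    intro k
    induction k with
    | zero => simp
    | succ k ih => have := hlt k; omega
  have := key (f 0 + 1)
  omega

/-- for a singular square matrix `A` there is a von Neumann inverse `A⁻`
with `i(A) = i(A²A⁻ + I − AA⁻) + 1`. -/
theorem exists_vonNeumann_index {F : Type*} [Field F] {n : ℕ}
    (A : Matrix (Fin n) (Fin n) F) (hsing : ¬ IsUnit A) :
    ∃ Am : Matrix (Fin n) (Fin n) F, A * Am * A = A ∧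
      drazinIndex A = drazinIndex (A * A * Am + 1 - A * Am) + 1 := by
  obtain ⟨Am, hAm⟩ := exists_vonNeumann_aux A
  refine ⟨Am, hAm, ?_⟩
  obtain ⟨P, hPdef⟩ : ∃ P : Matrix (Fin n) (Fin n) F, P = A * Am := ⟨_, rfl⟩
  obtain ⟨B, hBdef⟩ : ∃ B : Matrix (Fin n) (Fin n) F, B = A * A * Am + 1 - A * Am := ⟨_, rfl⟩
  rw [← hBdef]
  have h1 : P * A = A := by rw [hPdef]; exact hAm
  have h2 : P * P = P := by
    calc P * P = (A * Am * A) * Am := by rw [hPdef]; noncomm_ring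
    _ = P := by rw [hAm, hPdef]
  have hB : B = A * P + (1 - P) := by rw [hBdef, hPdef]; noncomm_ring
  -- powers of B
  have hpow : ∀ j : ℕ, B ^ (j + 1) = A ^ (j + 1) * P + (1 - P) := by
    intro j
    induction j with
    | zero => simpa using hB
    | succ j ih =>
      calc B ^ (j + 1 + 1) = (A ^ (j + 1) * P + (1 - P)) * (A * P + (1 - P)) := by
            rw [pow_succ, ih, hB]
        _ = A ^ (j + 1) * ((P * A) * P) + A ^ (j + 1) * (P - P * P)
              + (A * P - (P * A) * P) + (1 - P - P + P * P) := by
            noncomm_ring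
        _ = A ^ (j + 1 + 1) * P + (1 - P) := by
            rw [h1, h2, pow_succ]; noncomm_ring
  have hPA : ∀ j : ℕ, P * A ^ (j + 1) = A ^ (j + 1) := by
    intro j
    rw [pow_succ', ← mul_assoc, h1]
  -- the complementary rank
  set W : Submodule F (Fin n → F) := LinearMap.range ((1 - P).mulVecLin) with hW
  set w : ℕ := Module.finrank F W with hw
  have hPker : ∀ x ∈ W, P.mulVecLin x = 0 := by
    rintro _ ⟨z, rfl⟩
    have hz : P * (1 - P) = 0 := by rw [mul_sub, mul_one, h2, sub_self]
    rw [← LinearMap.comp_apply, ← Matrix.mulVecLin_mul, hz]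
    simp
  have hPfix : ∀ j : ℕ, ∀ x ∈ LinearMap.range ((A ^ (j + 1)).mulVecLin),
      P.mulVecLin x = x := by
    rintro j _ ⟨y, rfl⟩
    rw [← LinearMap.comp_apply, ← Matrix.mulVecLin_mul, hPA j]
  have hinf : ∀ j : ℕ, LinearMap.range ((A ^ (j + 1)).mulVecLin) ⊓ W = ⊥ := by
    intro j
    rw [eq_bot_iff]
    rintro x ⟨hx1, hx2⟩
    have e1 := hPfix j x hx1
    have e2 := hPker x hx2
    simp only [Submodule.mem_bot]
    rw [← e1, e2]
  have hrangeA : LinearMap.range (A.mulVecLin) = LinearMap.range (P.mulVecLin) := by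
    apply le_antisymm
    · have hA' : A = P * A := h1.symm
      nth_rewrite 1 [hA']
      rw [Matrix.mulVecLin_mul]
      exact LinearMap.range_comp_le_range _ _
    · rw [hPdef, Matrix.mulVecLin_mul]
      exact LinearMap.range_comp_le_range _ _
  have hwn : A.rank + w = n := by
    have hsup : LinearMap.range (P.mulVecLin) ⊔ W = ⊤ := by
      rw [eq_top_iff]
      intro x _
      have hx : x = P.mulVecLin x + (1 - P).mulVecLin x := by
        simp [Matrix.mulVecLin_apply, Matrix.sub_mulVec, Matrix.one_mulVec]
      rw [hx]
      exact Submodule.add_mem_sup (LinearMap.mem_range_self _ x) (LinearMap.mem_range_self _ x)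
    have hinfP : LinearMap.range (P.mulVecLin) ⊓ W = ⊥ := by
      rw [eq_bot_iff]
      rintro x ⟨hx1, hx2⟩
      obtain ⟨y, rfl⟩ := hx1
      have e2 := hPker _ hx2
      rw [← LinearMap.comp_apply, ← Matrix.mulVecLin_mul, h2] at e2
      simpa using e2
    have hkey := Submodule.finrank_sup_add_finrank_inf_eq (LinearMap.range (P.mulVecLin)) W
    rw [hsup, hinfP, finrank_top, finrank_bot, add_zero] at hkey
    have hfr : Module.finrank F (Fin n → F) = n := by
      simp [Module.finrank_pi]
    rw [Matrix.rank, hrangeA, hw]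
    omega
  -- the main rank formula
  have hr : ∀ j : ℕ, (B ^ j).rank = (A ^ (j + 1)).rank + w := by
    intro j
    cases j with
    | zero =>
      rw [pow_zero, pow_one, Matrix.rank_one]
      simp only [Fintype.card_fin]
      omega
    | succ j =>
      have hsup : LinearMap.range ((B ^ (j + 1)).mulVecLin)
          = LinearMap.range ((A ^ (j + 1 + 1)).mulVecLin) ⊔ W := by
        apply le_antisymm
        · rintro _ ⟨x, rfl⟩
          have hform : B ^ (j + 1) = A ^ (j + 1 + 1) * Am + (1 - P) := by
            rw [hpow j, hPdef, ← mul_assoc, ← pow_succ]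
          rw [hform]
          have happ : (A ^ (j + 1 + 1) * Am + (1 - P)).mulVecLin x
              = (A ^ (j + 1 + 1)).mulVecLin (Am.mulVecLin x) + (1 - P).mulVecLin x := by
            rw [← LinearMap.comp_apply, ← Matrix.mulVecLin_mul]
            simp [Matrix.mulVecLin_apply, Matrix.add_mulVec]
          rw [happ]
          exact Submodule.add_mem_sup (LinearMap.mem_range_self _ _)
            (LinearMap.mem_range_self _ _)
        · apply sup_le
          · have hBA : B ^ (j + 1) * A = A ^ (j + 1 + 1) := by
              rw [hpow j]
              calc (A ^ (j + 1) * P + (1 - P)) * A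
                  = A ^ (j + 1) * (P * A) + (A - P * A) := by noncomm_ring
                _ = A ^ (j + 1 + 1) := by rw [h1, sub_self, add_zero]; noncomm_ring
            rw [← hBA, Matrix.mulVecLin_mul]
            exact LinearMap.range_comp_le_range _ _
          · have hB1P : B ^ (j + 1) * (1 - P) = 1 - P := by
              rw [hpow j]
              calc (A ^ (j + 1) * P + (1 - P)) * (1 - P)
                  = A ^ (j + 1) * (P - P * P) + (1 - P - (P - P * P)) := by noncomm_ring
                _ = 1 - P := by rw [h2, sub_self, mul_zero, zero_add, sub_zero]
            rw [hW, ← hB1P, Matrix.mulVecLin_mul]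
            exact LinearMap.range_comp_le_range _ _
      have hkey := Submodule.finrank_sup_add_finrank_inf_eq
        (LinearMap.range ((A ^ (j + 1 + 1)).mulVecLin)) W
      rw [hinf (j + 1), finrank_bot, add_zero] at hkey
      rw [Matrix.rank, hsup, hkey, Matrix.rank, hw]
  -- singularity: rank A < n
  have hrankA : A.rank < n := by
    rcases lt_or_eq_of_le (le_of_le_of_eq A.rank_le_card_width (Fintype.card_fin n)) with h | h
    · exact h
    · exfalso
      apply hsing
      rw [← Matrix.mulVec_surjective_iff_isUnit]
      have htop : LinearMap.range (A.mulVecLin) = ⊤ := by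
        apply Submodule.eq_top_of_finrank_eq
        have hfr : Module.finrank F (Fin n → F) = n := by simp [Module.finrank_pi]
        rw [← Matrix.rank, h, hfr]
      have hsurj := LinearMap.range_eq_top.1 htop
      intro y
      obtain ⟨x, hx⟩ := hsurj y
      exact ⟨x, hx⟩
  -- index sets
  have hiff : ∀ k : ℕ, ((B ^ k).rank = (B ^ (k + 1)).rank ↔
      (A ^ (k + 1)).rank = (A ^ (k + 1 + 1)).rank) := by
    intro k
    rw [hr k, hr (k + 1)]
    omega
  have hBmono : ∀ k : ℕ, (B ^ (k + 1)).rank ≤ (B ^ k).rank := by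
    intro k
    rw [pow_succ]
    exact Matrix.rank_mul_le_left _ _
  obtain ⟨m', hm'⟩ := exists_rank_pow_stab (fun k => (B ^ k).rank) hBmono
  have hSBne : {k : ℕ | (B ^ k).rank = (B ^ (k + 1)).rank}.Nonempty := ⟨m', hm'⟩
  have hmem : sInf {k : ℕ | (B ^ k).rank = (B ^ (k + 1)).rank}
      ∈ {k : ℕ | (B ^ k).rank = (B ^ (k + 1)).rank} := Nat.sInf_mem hSBne
  set m : ℕ := sInf {k : ℕ | (B ^ k).rank = (B ^ (k + 1)).rank} with hm
  have hmemA : m + 1 ∈ {k : ℕ | (A ^ k).rank = (A ^ (k + 1)).rank} := (hiff m).1 hmem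
  have h0A : (0 : ℕ) ∉ {k : ℕ | (A ^ k).rank = (A ^ (k + 1)).rank} := by
    intro h0
    have h0' : ((A : Matrix (Fin n) (Fin n) F) ^ 0).rank = (A ^ (0 + 1)).rank := h0
    rw [pow_zero, zero_add, pow_one, Matrix.rank_one, Fintype.card_fin] at h0'
    omega
  have hle : sInf {k : ℕ | (A ^ k).rank = (A ^ (k + 1)).rank} ≤ m + 1 := Nat.sInf_le hmemA
  have hge : m + 1 ≤ sInf {k : ℕ | (A ^ k).rank = (A ^ (k + 1)).rank} := by
    apply le_csInf ⟨m + 1, hmemA⟩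
    intro k hk
    match k with
    | 0 => exact absurd hk h0A
    | (j + 1) =>
      have hj : j ∈ {k : ℕ | (B ^ k).rank = (B ^ (k + 1)).rank} := (hiff j).2 hk
      have := Nat.sInf_le hj
      omega
  show sInf {k : ℕ | (A ^ k).rank = (A ^ (k + 1)).rank} = m + 1
  omega
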